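/- arXiv:2209.05476 — 3 statements merged into one kernel-verified Lean document; each statement's English description precedes it below -/
import Mathlib

section
/- For every Riccati solution X and every admissible pair (u,x) with initial state x₀, the completion-of-squares identity holds: J(u,x) = (1/2)·x₀ᵀ M(0)ᵀ X(0) M(0) x₀ + (λ/2)·∫₀ᵀ ‖u(t) + (1/λ)·B̂(t)ᵀ X(t) M(t) x(t)‖² dt. -/
open Matrix Set MeasureTheory

noncomputable section

/-- Entrywise continuity on a set for matrix-valued functions of one real variable. -/
def MatContOn {a b : ℕ} (f : ℝ → Matrix (Fin a) (Fin b) ℝ) (s : Set ℝ) : Prop :=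
  ∀ i j, ContinuousOn (fun t => f t i j) s

lemma contOn_dot {k : ℕ} {a b : ℝ → Fin k → ℝ} {s : Set ℝ}
    (ha : ∀ i, ContinuousOn (fun t => a t i) s)
    (hb : ∀ i, ContinuousOn (fun t => b t i) s) :
    ContinuousOn (fun t => a t ⬝ᵥ b t) s := by
  simp only [dotProduct]
  exact continuousOn_finset_sum _ fun i _ => (ha i).mul (hb i)

lemma contOn_mulVec {a b : ℕ} {F : ℝ → Matrix (Fin a) (Fin b) ℝ} {v : ℝ → Fin b → ℝ}
    {s : Set ℝ} (hF : MatContOn F s) (hv : ∀ i, ContinuousOn (fun t => v t i) s) :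
    ∀ i, ContinuousOn (fun t => (F t).mulVec (v t) i) s := by
  intro i
  simp only [Matrix.mulVec, dotProduct]
  exact continuousOn_finset_sum _ fun j _ => (hF i j).mul (hv j)

lemma matContOn_mul {a b c : ℕ} {F : ℝ → Matrix (Fin a) (Fin b) ℝ}
    {G : ℝ → Matrix (Fin b) (Fin c) ℝ} {s : Set ℝ}
    (hF : MatContOn F s) (hG : MatContOn G s) :
    MatContOn (fun t => F t * G t) s := by
  intro i j
  simp only [Matrix.mul_apply]
  exact continuousOn_finset_sum _ fun k _ => (hF i k).mul (hG k j)

lemma matContOn_transpose {a b : ℕ} {F : ℝ → Matrix (Fin a) (Fin b) ℝ} {s : Set ℝ}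
    (hF : MatContOn F s) : MatContOn (fun t => (F t)ᵀ) s := fun i j => hF j i

lemma dotT {a b : ℕ} (A : Matrix (Fin a) (Fin b) ℝ) (w : Fin b → ℝ) (y : Fin a → ℝ) :
    w ⬝ᵥ Aᵀ *ᵥ y = A *ᵥ w ⬝ᵥ y := by
  rw [dotProduct_mulVec, vecMul_transpose]

lemma quad_algebra {n m r : ℕ} (lam : ℝ) (hlam : lam ≠ 0)
    (Mt At : Matrix (Fin n) (Fin n) ℝ) (Bt : Matrix (Fin n) (Fin m) ℝ)
    (Ct : Matrix (Fin r) (Fin n) ℝ) (Xt Yt : Matrix (Fin n) (Fin n) ℝ)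
    (hsym : Xtᵀ = Xt) (v v' : Fin n → ℝ) (uv : Fin m → ℝ)
    (hdyn : Mt *ᵥ v' = At *ᵥ v + Bt *ᵥ uv)
    (hric : -Yt = Ctᵀ * Ct + Atᵀ * Xt * Mt + Mtᵀ * Xt * At
      - (1 / lam) • (Mtᵀ * Xt * Bt * Btᵀ * Xt * Mt)) :
    v' ⬝ᵥ (Mtᵀ * Xt * Mt) *ᵥ v + v ⬝ᵥ Yt *ᵥ v + v ⬝ᵥ (Mtᵀ * Xt * Mt) *ᵥ v'
      = lam * ((uv + (1/lam) • (Btᵀ * Xt * Mt) *ᵥ v) ⬝ᵥ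
          (uv + (1/lam) • (Btᵀ * Xt * Mt) *ᵥ v))
        - (Ct *ᵥ v ⬝ᵥ Ct *ᵥ v + lam * (uv ⬝ᵥ uv)) := by
  have hY : Yt = -(Ctᵀ * Ct) - Atᵀ * Xt * Mt - Mtᵀ * Xt * At
      + (1 / lam) • (Mtᵀ * Xt * Bt * Btᵀ * Xt * Mt) := by
    have : Yt = -(Ctᵀ * Ct + Atᵀ * Xt * Mt + Mtᵀ * Xt * At
        - (1 / lam) • (Mtᵀ * Xt * Bt * Btᵀ * Xt * Mt)) := by rw [← hric, neg_neg]
    rw [this]; abel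
  set q : Fin n → ℝ := Mt *ᵥ v with hq
  set p : Fin n → ℝ := Xt *ᵥ q with hp
  set z : Fin m → ℝ := Btᵀ *ᵥ p with hz
  have dotX : ∀ (w y : Fin n → ℝ), w ⬝ᵥ Xt *ᵥ y = Xt *ᵥ w ⬝ᵥ y := by
    intro w y; conv_lhs => rw [← hsym]
    exact dotT Xt w y
  have dotB : ∀ (w : Fin n → ℝ) (y : Fin m → ℝ), w ⬝ᵥ Bt *ᵥ y = Btᵀ *ᵥ w ⬝ᵥ y := by
    intro w y; conv_lhs => rw [← transpose_transpose Bt]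
    exact dotT Btᵀ w y
  -- term 1
  have t1 : v' ⬝ᵥ (Mtᵀ * Xt * Mt) *ᵥ v = At *ᵥ v ⬝ᵥ p + uv ⬝ᵥ z := by
    simp only [← Matrix.mulVec_mulVec]
    rw [dotT, hdyn, add_dotProduct]
    congr 1
    rw [dotProduct_comm, dotB, dotProduct_comm]
  -- term 3
  have t3 : v ⬝ᵥ (Mtᵀ * Xt * Mt) *ᵥ v' = At *ᵥ v ⬝ᵥ p + uv ⬝ᵥ z := by
    simp only [← Matrix.mulVec_mulVec]
    rw [dotT, ← hq, dotX, ← hp, hdyn, dotProduct_add]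
    congr 1
    · exact dotProduct_comm _ _
    · rw [dotB, ← hz, dotProduct_comm]
  -- term 2
  have hz2 : v ⬝ᵥ (Mtᵀ * Xt * Bt * Btᵀ * Xt * Mt) *ᵥ v = z ⬝ᵥ z := by
    simp only [← Matrix.mulVec_mulVec]
    rw [dotT, ← hq, dotX, ← hp, dotB, ← hz]
  have e1 : v ⬝ᵥ (Ctᵀ * Ct) *ᵥ v = Ct *ᵥ v ⬝ᵥ Ct *ᵥ v := by
    simp only [← Matrix.mulVec_mulVec]; rw [dotT]
  have e2 : v ⬝ᵥ (Atᵀ * Xt * Mt) *ᵥ v = At *ᵥ v ⬝ᵥ p := by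
    simp only [← Matrix.mulVec_mulVec]; rw [dotT, ← hq, ← hp]
  have e3 : v ⬝ᵥ (Mtᵀ * Xt * At) *ᵥ v = At *ᵥ v ⬝ᵥ p := by
    simp only [← Matrix.mulVec_mulVec]
    rw [dotT, ← hq, dotX, ← hp, dotProduct_comm]
  have t2 : v ⬝ᵥ Yt *ᵥ v
      = -(Ct *ᵥ v ⬝ᵥ Ct *ᵥ v) - At *ᵥ v ⬝ᵥ p - At *ᵥ v ⬝ᵥ p
        + (1/lam) * (z ⬝ᵥ z) := by
    rw [hY, add_mulVec, sub_mulVec, sub_mulVec, neg_mulVec, dotProduct_add,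
      dotProduct_sub, dotProduct_sub, dotProduct_neg, smul_mulVec,
      dotProduct_smul, smul_eq_mul, hz2, e1, e2, e3]
  have hzv : (Btᵀ * Xt * Mt) *ᵥ v = z := by
    simp only [← Matrix.mulVec_mulVec]; rfl
  rw [t1, t2, t3, hzv]
  simp only [dotProduct_add, add_dotProduct, dotProduct_smul, smul_dotProduct,
    smul_eq_mul]
  rw [dotProduct_comm z uv]
  field_simp
  ring

lemma hasDeriv_quadform {n : ℕ} {P Y : Matrix (Fin n) (Fin n) ℝ}
    {Pf : ℝ → Matrix (Fin n) (Fin n) ℝ} {x : ℝ → Fin n → ℝ} {xd : Fin n → ℝ}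
    {s : Set ℝ} {t : ℝ} (hPt : Pf t = P)
    (hP : ∀ i j, HasDerivWithinAt (fun s => Pf s i j) (Y i j) s t)
    (hx : ∀ i, HasDerivWithinAt (fun s => x s i) (xd i) s t) :
    HasDerivWithinAt (fun s => x s ⬝ᵥ (Pf s) *ᵥ x s)
      (xd ⬝ᵥ P *ᵥ x t + x t ⬝ᵥ Y *ᵥ x t + x t ⬝ᵥ P *ᵥ xd) s t := by
  have h1 : HasDerivWithinAt (fun s => ∑ i, ∑ j, x s i * (Pf s i j * x s j))
      (∑ i, ∑ j, (xd i * (Pf t i j * x t j)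
        + x t i * (Y i j * x t j + Pf t i j * xd j))) s t := by
    apply HasDerivWithinAt.fun_sum; intro i _
    apply HasDerivWithinAt.fun_sum; intro j _
    exact (hx i).mul ((hP i j).mul (hx j))
  have hfun : (fun s => x s ⬝ᵥ (Pf s) *ᵥ x s)
      = fun s => ∑ i, ∑ j, x s i * (Pf s i j * x s j) := by
    funext s
    simp [dotProduct, Matrix.mulVec, Finset.mul_sum]
  have hval : xd ⬝ᵥ P *ᵥ x t + x t ⬝ᵥ Y *ᵥ x t + x t ⬝ᵥ P *ᵥ xd
      = ∑ i, ∑ j, (xd i * (Pf t i j * x t j)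
        + x t i * (Y i j * x t j + Pf t i j * xd j)) := by
    subst hPt
    simp only [dotProduct, Matrix.mulVec, Finset.mul_sum, mul_add,
      Finset.sum_add_distrib]
    ring_nf
  rw [hfun, hval]
  exact h1

/-- The quadratic cost functional `J(u, x)`, with Euclidean norms written via dot products. -/
def cost {n m r : ℕ} (lam T : ℝ) (C : ℝ → Matrix (Fin r) (Fin n) ℝ)
    (u : ℝ → Fin m → ℝ) (x : ℝ → Fin n → ℝ) : ℝ :=
  (1 / 2) * ∫ t in (0:ℝ)..T,
    ((C t).mulVec (x t) ⬝ᵥ (C t).mulVec (x t) + lam * (u t ⬝ᵥ u t))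

/-- An admissible control/state pair with initial state `x₀`: `u` continuous, `x`
differentiable on `[0, T]` with `M(t) x'(t) = A(t) x(t) + B(t) u(t)` and `x(0) = x₀`. -/
structure Admissible {n m : ℕ} (T : ℝ) (M A : ℝ → Matrix (Fin n) (Fin n) ℝ)
    (B : ℝ → Matrix (Fin n) (Fin m) ℝ) (x₀ : Fin n → ℝ)
    (u : ℝ → Fin m → ℝ) (x : ℝ → Fin n → ℝ) : Prop where
  u_cont : ∀ i, ContinuousOn (fun t => u t i) (Icc 0 T)
  dyn : ∃ x' : ℝ → Fin n → ℝ,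
    (∀ t ∈ Icc (0:ℝ) T, ∀ i, HasDerivWithinAt (fun s => x s i) (x' t i) (Icc (0:ℝ) T) t) ∧
    (∀ t ∈ Icc (0:ℝ) T, (M t).mulVec (x' t) = (A t).mulVec (x t) + (B t).mulVec (u t))
  init : x 0 = x₀

/-- A solution of the generalized differential Riccati equation: continuous, symmetric,
`t ↦ M(t)ᵀ X(t) M(t)` differentiable on `[0, T]`, terminal value `X(T) = 0`, and the
generalized DRE holds on `[0, T]`. -/
structure RiccatiSol {n m r : ℕ} (T lam : ℝ) (M A : ℝ → Matrix (Fin n) (Fin n) ℝ)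
    (B : ℝ → Matrix (Fin n) (Fin m) ℝ) (C : ℝ → Matrix (Fin r) (Fin n) ℝ)
    (X : ℝ → Matrix (Fin n) (Fin n) ℝ) : Prop where
  cont : MatContOn X (Icc 0 T)
  symm : ∀ t ∈ Icc (0:ℝ) T, (X t)ᵀ = X t
  terminal : X T = 0
  riccati : ∃ Y : ℝ → Matrix (Fin n) (Fin n) ℝ,
    (∀ t ∈ Icc (0:ℝ) T, ∀ i j,
      HasDerivWithinAt (fun s => ((M s)ᵀ * X s * M s) i j) (Y t i j) (Icc (0:ℝ) T) t) ∧
    (∀ t ∈ Icc (0:ℝ) T,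
      -(Y t) = (C t)ᵀ * C t + (A t)ᵀ * X t * M t + (M t)ᵀ * X t * A t
        - (1 / lam) • ((M t)ᵀ * X t * B t * (B t)ᵀ * X t * M t))

/-- Completion-of-squares identity: for every Riccati solution `X` and every admissible
pair `(u, x)` with initial state `x₀`,
`J(u,x) = (1/2) x₀ᵀ M(0)ᵀ X(0) M(0) x₀ + (λ/2) ∫₀ᵀ ‖u(t) + (1/λ) B̂(t)ᵀ X(t) M(t) x(t)‖² dt`. -/
theorem completion_of_squares {n m r : ℕ} (T lam : ℝ) (hT : 0 < T) (hlam : 0 < lam)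
    (M A : ℝ → Matrix (Fin n) (Fin n) ℝ) (B : ℝ → Matrix (Fin n) (Fin m) ℝ)
    (C : ℝ → Matrix (Fin r) (Fin n) ℝ)
    (hM : MatContOn M (Icc 0 T)) (hA : MatContOn A (Icc 0 T))
    (hB : MatContOn B (Icc 0 T)) (hC : MatContOn C (Icc 0 T))
    (X : ℝ → Matrix (Fin n) (Fin n) ℝ) (hX : RiccatiSol T lam M A B C X)
    (x₀ : Fin n → ℝ) (u : ℝ → Fin m → ℝ) (x : ℝ → Fin n → ℝ)
    (hadm : Admissible T M A B x₀ u x) :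
    cost lam T C u x =
      (1 / 2) * (x₀ ⬝ᵥ ((M 0)ᵀ * X 0 * M 0).mulVec x₀)
        + (lam / 2) * ∫ t in (0:ℝ)..T,
            ((u t + (1 / lam) • ((B t)ᵀ * X t * M t).mulVec (x t)) ⬝ᵥ
              (u t + (1 / lam) • ((B t)ᵀ * X t * M t).mulVec (x t))) := by
  obtain ⟨x', hx'deriv, hdyn⟩ := hadm.dyn
  obtain ⟨Y, hYderiv, hric⟩ := hX.riccati
  have hT' : (0:ℝ) ∈ Icc (0:ℝ) T := ⟨le_refl 0, hT.le⟩
  have hTT : T ∈ Icc (0:ℝ) T := ⟨hT.le, le_refl T⟩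
  set V : ℝ → ℝ := fun t => x t ⬝ᵥ ((M t)ᵀ * X t * M t) *ᵥ x t with hV
  set f : ℝ → ℝ := fun t =>
    (C t) *ᵥ (x t) ⬝ᵥ (C t) *ᵥ (x t) + lam * (u t ⬝ᵥ u t) with hf
  set w : ℝ → Fin m → ℝ :=
    fun t => u t + (1 / lam) • ((B t)ᵀ * X t * M t) *ᵥ (x t) with hw
  set g : ℝ → ℝ := fun t => w t ⬝ᵥ w t with hg
  -- derivative of V with completed-square value
  have hVd : ∀ t ∈ Icc (0:ℝ) T,
      HasDerivWithinAt V (lam * g t - f t) (Icc (0:ℝ) T) t := by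
    intro t ht
    have h1 := hasDeriv_quadform (P := (M t)ᵀ * X t * M t) (Y := Y t)
      (Pf := fun s => (M s)ᵀ * X s * M s) (x := x) (xd := x' t) rfl
      (fun i j => hYderiv t ht i j) (fun i => hx'deriv t ht i)
    have halg := quad_algebra lam hlam.ne' (M t) (A t) (B t) (C t) (X t) (Y t)
      (hX.symm t ht) (x t) (x' t) (u t) (hdyn t ht) (hric t ht)
    rw [hV]
    have : lam * g t - f t
        = x' t ⬝ᵥ ((M t)ᵀ * X t * M t) *ᵥ x t + x t ⬝ᵥ Y t *ᵥ x t
          + x t ⬝ᵥ ((M t)ᵀ * X t * M t) *ᵥ x' t := by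
      rw [hg, hf, hw]; rw [halg]
    rw [this]
    exact h1
  -- continuity facts
  have hxc : ∀ i, ContinuousOn (fun t => x t i) (Icc 0 T) :=
    fun i t ht => (hx'deriv t ht i).continuousWithinAt
  have hwc : ∀ i, ContinuousOn (fun t => w t i) (Icc 0 T) := by
    intro i
    have hmat : MatContOn (fun t => (B t)ᵀ * X t * M t) (Icc 0 T) :=
      matContOn_mul (matContOn_mul (matContOn_transpose hB) hX.cont) hM
    have h2 := contOn_mulVec hmat hxc i
    have : (fun t => w t i)
        = fun t => u t i + (1 / lam) * (((B t)ᵀ * X t * M t) *ᵥ (x t)) i := by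
      funext t; simp [hw]
    rw [this]
    exact (hadm.u_cont i).add (continuousOn_const.mul h2)
  have hgc : ContinuousOn g (Icc 0 T) := contOn_dot hwc hwc
  have hfc : ContinuousOn f (Icc 0 T) := by
    apply ContinuousOn.add
    · exact contOn_dot (contOn_mulVec hC hxc) (contOn_mulVec hC hxc)
    · exact continuousOn_const.mul (contOn_dot hadm.u_cont hadm.u_cont)
  have hgint : IntervalIntegrable g volume 0 T := by
    apply ContinuousOn.intervalIntegrable
    rwa [uIcc_of_le hT.le]
  have hfint : IntervalIntegrable f volume 0 T := by
    apply ContinuousOn.intervalIntegrable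
    rwa [uIcc_of_le hT.le]
  -- FTC
  have hftc : (∫ t in (0:ℝ)..T, (lam * g t - f t)) = V T - V 0 := by
    apply intervalIntegral.integral_eq_sub_of_hasDeriv_right_of_le hT.le
    · exact fun t ht => (hVd t ht).continuousWithinAt
    · intro t ht
      exact ((hVd t (Ioo_subset_Icc_self ht)).hasDerivAt
        (Icc_mem_nhds ht.1 ht.2)).hasDerivWithinAt
    · exact (hgint.const_mul lam).sub hfint
  have hVT : V T = 0 := by simp [hV, hX.terminal]
  have hV0 : V 0 = x₀ ⬝ᵥ ((M 0)ᵀ * X 0 * M 0) *ᵥ x₀ := by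
    simp only [hV]; rw [hadm.init]
  rw [intervalIntegral.integral_sub (hgint.const_mul lam) hfint,
    intervalIntegral.integral_const_mul, hVT, hV0, zero_sub] at hftc
  have hcost : cost lam T C u x = (1 / 2) * ∫ t in (0:ℝ)..T, f t := rfl
  rw [hcost]
  have : (∫ t in (0:ℝ)..T, f t)
      = x₀ ⬝ᵥ ((M 0)ᵀ * X 0 * M 0) *ᵥ x₀ + lam * ∫ t in (0:ℝ)..T, g t := by
    linarith
  rw [this]
  simp only [hg, hw]
  ring
end
end

section
/- Let X be a Riccati solution and x₀ ∈ ℝ^n. If (u, x) is an admissible pair with initial state x₀ whose cost attains the optimal value, J(u,x) = (1/2)·x₀ᵀ M(0)ᵀ X(0) M(0) x₀, then u satisfies the feedback law u(t) = −(1/λ)·B̂(t)ᵀ X(t) M(t) x(t) for every t ∈ [0,T]; i.e., the minimizing control of the linear-quadratic regulator problem is uniquely given by the Riccati feedback. -/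
open Matrix Set MeasureTheory

noncomputable section

/- ### Auxiliary lemmas -/

lemma dotT_s2 {n m : ℕ} (Q : Matrix (Fin n) (Fin m) ℝ) (a : Fin n → ℝ) (b : Fin m → ℝ) :
    a ⬝ᵥ Q.mulVec b = Qᵀ.mulVec a ⬝ᵥ b := by
  rw [Matrix.dotProduct_mulVec, Matrix.mulVec_transpose]

lemma key_algebra {n m r : ℕ} (lam : ℝ) (hlam : lam ≠ 0)
    (Mt At Xt Yt : Matrix (Fin n) (Fin n) ℝ) (Bt : Matrix (Fin n) (Fin m) ℝ)
    (Ct : Matrix (Fin r) (Fin n) ℝ)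
    (xt x't : Fin n → ℝ) (ut : Fin m → ℝ)
    (hsymm : Xtᵀ = Xt)
    (hdyn : Mt.mulVec x't = At.mulVec xt + Bt.mulVec ut)
    (hric : -Yt = Ctᵀ * Ct + Atᵀ * Xt * Mt + Mtᵀ * Xt * At
      - (1 / lam) • (Mtᵀ * Xt * Bt * Btᵀ * Xt * Mt)) :
    x't ⬝ᵥ (Mtᵀ * Xt * Mt).mulVec xt + xt ⬝ᵥ Yt.mulVec xt
      + xt ⬝ᵥ (Mtᵀ * Xt * Mt).mulVec x't
    = lam * ((ut + (1 / lam) • (Btᵀ * Xt * Mt).mulVec xt)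
          ⬝ᵥ (ut + (1 / lam) • (Btᵀ * Xt * Mt).mulVec xt))
      - ((Ct.mulVec xt) ⬝ᵥ (Ct.mulVec xt) + lam * (ut ⬝ᵥ ut)) := by
  have hY : Yt = -(Ctᵀ * Ct + Atᵀ * Xt * Mt + Mtᵀ * Xt * At
      - (1 / lam) • (Mtᵀ * Xt * Bt * Btᵀ * Xt * Mt)) := by
    rw [← hric, neg_neg]
  set z : Fin n → ℝ := (Xt * Mt).mulVec xt with hz
  set v : Fin m → ℝ := (Btᵀ * Xt * Mt).mulVec xt with hv
  have hvz : v = Btᵀ.mulVec z := by rw [hv, hz, Matrix.mul_assoc, ← Matrix.mulVec_mulVec]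
  -- term1
  have hP1 : (Mtᵀ * Xt * Mt).mulVec xt = Mtᵀ.mulVec z := by
    rw [hz, Matrix.mul_assoc, ← Matrix.mulVec_mulVec]
  have ht1 : x't ⬝ᵥ (Mtᵀ * Xt * Mt).mulVec xt
      = (At.mulVec xt) ⬝ᵥ z + v ⬝ᵥ ut := by
    rw [hP1, dotT_s2, Matrix.transpose_transpose, hdyn, add_dotProduct]
    congr 1
    rw [dotProduct_comm, dotT_s2, hvz]
  -- symmetry of P
  have hPsymm : (Mtᵀ * Xt * Mt)ᵀ = Mtᵀ * Xt * Mt := by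
    simp [Matrix.transpose_mul, hsymm, Matrix.mul_assoc]
  have ht3 : xt ⬝ᵥ (Mtᵀ * Xt * Mt).mulVec x't
      = (At.mulVec xt) ⬝ᵥ z + v ⬝ᵥ ut := by
    rw [dotT_s2, hPsymm, dotProduct_comm, ht1]
  -- term2 pieces
  have hp1 : xt ⬝ᵥ (Ctᵀ * Ct).mulVec xt = (Ct.mulVec xt) ⬝ᵥ (Ct.mulVec xt) := by
    rw [← Matrix.mulVec_mulVec, dotT_s2, Matrix.transpose_transpose]
  have hp2 : xt ⬝ᵥ (Atᵀ * Xt * Mt).mulVec xt = (At.mulVec xt) ⬝ᵥ z := by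
    rw [Matrix.mul_assoc, ← Matrix.mulVec_mulVec, dotT_s2, Matrix.transpose_transpose, hz]
  have hp3 : xt ⬝ᵥ (Mtᵀ * Xt * At).mulVec xt = (At.mulVec xt) ⬝ᵥ z := by
    have h : (Mtᵀ * Xt * At)ᵀ = Atᵀ * Xt * Mt := by
      simp [Matrix.transpose_mul, hsymm, Matrix.mul_assoc]
    rw [dotT_s2, h, dotProduct_comm, hp2]
  have hp4 : xt ⬝ᵥ (Mtᵀ * Xt * Bt * Btᵀ * Xt * Mt).mulVec xt = v ⬝ᵥ v := by
    have h1 : Mtᵀ * Xt * Bt * Btᵀ * Xt * Mt = (Mtᵀ * Xt * Bt) * (Btᵀ * Xt * Mt) := by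
      simp [Matrix.mul_assoc]
    have h2 : (Btᵀ * Xt * Mt)ᵀ = Mtᵀ * Xt * Bt := by
      simp [Matrix.transpose_mul, hsymm, Matrix.mul_assoc]
    rw [h1, ← Matrix.mulVec_mulVec, ← hv, ← h2, dotT_s2, Matrix.transpose_transpose, ← hv]
  have ht2 : xt ⬝ᵥ Yt.mulVec xt
      = -((Ct.mulVec xt) ⬝ᵥ (Ct.mulVec xt)) - 2 * ((At.mulVec xt) ⬝ᵥ z)
        + (1 / lam) * (v ⬝ᵥ v) := by
    rw [hY]
    simp only [Matrix.neg_mulVec, dotProduct_neg, Matrix.sub_mulVec,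
      Matrix.add_mulVec, dotProduct_sub, dotProduct_add,
      Matrix.smul_mulVec, dotProduct_smul, smul_eq_mul]
    rw [hp1, hp2, hp3, hp4]; ring
  rw [ht1, ht2, ht3]
  have hexp : (ut + (1 / lam) • v) ⬝ᵥ (ut + (1 / lam) • v)
      = ut ⬝ᵥ ut + (1/lam) * (v ⬝ᵥ ut) + ((1/lam) * (v ⬝ᵥ ut) + (1/lam)^2 * (v ⬝ᵥ v)) := by
    simp only [dotProduct_add, add_dotProduct, smul_dotProduct,
      dotProduct_smul, smul_eq_mul]
    rw [dotProduct_comm ut v]; ring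
  rw [hexp]
  field_simp
  ring

lemma quadForm_hasDeriv {n : ℕ} (P Y : ℝ → Matrix (Fin n) (Fin n) ℝ)
    (x x' : ℝ → Fin n → ℝ) (s : Set ℝ) (t : ℝ)
    (hP : ∀ i j, HasDerivWithinAt (fun s => P s i j) (Y t i j) s t)
    (hx : ∀ i, HasDerivWithinAt (fun s => x s i) (x' t i) s t) :
    HasDerivWithinAt (fun s => x s ⬝ᵥ (P s).mulVec (x s))
      (x' t ⬝ᵥ (P t).mulVec (x t) + x t ⬝ᵥ (Y t).mulVec (x t)
        + x t ⬝ᵥ (P t).mulVec (x' t)) s t := by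
  have hfun : (fun s => x s ⬝ᵥ (P s).mulVec (x s))
      = fun s => ∑ i, ∑ j, x s i * (P s i j * x s j) := by
    funext s
    simp [dotProduct, Matrix.mulVec, Finset.mul_sum]
  have hsum : HasDerivWithinAt
      (fun s => ∑ i, ∑ j, x s i * (P s i j * x s j))
      (∑ i, ∑ j, (x' t i * (P t i j * x t j)
        + x t i * (Y t i j * x t j + P t i j * x' t j))) s t := by
    apply HasDerivWithinAt.fun_sum
    intro i _
    apply HasDerivWithinAt.fun_sum
    intro j _
    exact (hx i).mul ((hP i j).mul (hx j))
  rw [hfun]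
  convert hsum using 1
  simp only [dotProduct, Matrix.mulVec, Finset.mul_sum, mul_add,
    Finset.sum_add_distrib]
  ring_nf

lemma MatContOn.mul {a b c : ℕ} {f : ℝ → Matrix (Fin a) (Fin b) ℝ}
    {g : ℝ → Matrix (Fin b) (Fin c) ℝ} {s : Set ℝ}
    (hf : MatContOn f s) (hg : MatContOn g s) : MatContOn (fun t => f t * g t) s := by
  intro i j
  simp only [Matrix.mul_apply]
  exact continuousOn_finset_sum _ fun k _ => (hf i k).mul (hg k j)

lemma MatContOn.transpose {a b : ℕ} {f : ℝ → Matrix (Fin a) (Fin b) ℝ} {s : Set ℝ}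
    (hf : MatContOn f s) : MatContOn (fun t => (f t)ᵀ) s := fun i j => hf j i

lemma mulVec_contOn {a b : ℕ} {f : ℝ → Matrix (Fin a) (Fin b) ℝ} {x : ℝ → Fin b → ℝ}
    {s : Set ℝ} (hf : MatContOn f s) (hx : ∀ i, ContinuousOn (fun t => x t i) s) :
    ∀ i, ContinuousOn (fun t => (f t).mulVec (x t) i) s := by
  intro i
  simp only [Matrix.mulVec, dotProduct]
  exact continuousOn_finset_sum _ fun k _ => (hf i k).mul (hx k)

lemma dot_contOn {a : ℕ} {x y : ℝ → Fin a → ℝ} {s : Set ℝ}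
    (hx : ∀ i, ContinuousOn (fun t => x t i) s) (hy : ∀ i, ContinuousOn (fun t => y t i) s) :
    ContinuousOn (fun t => x t ⬝ᵥ y t) s := by
  simp only [dotProduct]
  exact continuousOn_finset_sum _ fun k _ => (hx k).mul (hy k)

lemma dot_self_nonneg {a : ℕ} (x : Fin a → ℝ) : 0 ≤ x ⬝ᵥ x :=
  Finset.sum_nonneg fun i _ => mul_self_nonneg (x i)

/-- Uniqueness of the minimizer: if an admissible pair `(u, x)` attains the optimal value
`(1/2) x₀ᵀ M(0)ᵀ X(0) M(0) x₀`, then `u` is the Riccati feedback control. -/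
theorem optimal_control_is_riccati_feedback {n m r : ℕ} (T lam : ℝ) (hT : 0 < T)
    (hlam : 0 < lam)
    (M A : ℝ → Matrix (Fin n) (Fin n) ℝ) (B : ℝ → Matrix (Fin n) (Fin m) ℝ)
    (C : ℝ → Matrix (Fin r) (Fin n) ℝ)
    (hM : MatContOn M (Icc 0 T)) (hA : MatContOn A (Icc 0 T))
    (hB : MatContOn B (Icc 0 T)) (hC : MatContOn C (Icc 0 T))
    (X : ℝ → Matrix (Fin n) (Fin n) ℝ) (hX : RiccatiSol T lam M A B C X)
    (x₀ : Fin n → ℝ) (u : ℝ → Fin m → ℝ) (x : ℝ → Fin n → ℝ)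
    (hadm : Admissible T M A B x₀ u x)
    (hopt : cost lam T C u x = (1 / 2) * (x₀ ⬝ᵥ ((M 0)ᵀ * X 0 * M 0).mulVec x₀)) :
    ∀ t ∈ Icc (0:ℝ) T, u t = -((1 / lam) • ((B t)ᵀ * X t * M t).mulVec (x t)) := by
  obtain ⟨x', hx', hdyn⟩ := hadm.dyn
  obtain ⟨Y, hY, hric⟩ := hX.riccati
  set v : ℝ → Fin m → ℝ := fun t => ((B t)ᵀ * X t * M t).mulVec (x t) with hv
  set w : ℝ → Fin m → ℝ := fun t => u t + (1 / lam) • v t with hw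
  set V : ℝ → ℝ := fun t => x t ⬝ᵥ ((M t)ᵀ * X t * M t).mulVec (x t) with hV
  set q : ℝ → ℝ := fun t => lam * (w t ⬝ᵥ w t) with hq
  set Jf : ℝ → ℝ := fun t =>
    (C t).mulVec (x t) ⬝ᵥ (C t).mulVec (x t) + lam * (u t ⬝ᵥ u t) with hJf
  -- continuity facts
  have hxc : ∀ i, ContinuousOn (fun t => x t i) (Icc 0 T) :=
    fun i t ht => (hx' t ht i).continuousWithinAt
  have hBXM : MatContOn (fun t => (B t)ᵀ * X t * M t) (Icc 0 T) :=
    (hB.transpose.mul hX.cont).mul hM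
  have hvc : ∀ i, ContinuousOn (fun t => v t i) (Icc 0 T) := mulVec_contOn hBXM hxc
  have hwc : ∀ i, ContinuousOn (fun t => w t i) (Icc 0 T) := by
    intro i
    have : (fun t => w t i) = fun t => u t i + (1 / lam) * v t i := rfl
    rw [this]
    exact (hadm.u_cont i).add (continuousOn_const.mul (hvc i))
  have hqc : ContinuousOn q (Icc 0 T) := continuousOn_const.mul (dot_contOn hwc hwc)
  have hJc : ContinuousOn Jf (Icc 0 T) := by
    have hCx := mulVec_contOn hC hxc
    exact (dot_contOn hCx hCx).add (continuousOn_const.mul (dot_contOn hadm.u_cont hadm.u_cont))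
  have huIcc : uIcc (0:ℝ) T = Icc 0 T := uIcc_of_le hT.le
  have hqint : IntervalIntegrable q volume 0 T :=
    (huIcc ▸ hqc : ContinuousOn q (uIcc 0 T)).intervalIntegrable
  have hJint : IntervalIntegrable Jf volume 0 T :=
    (huIcc ▸ hJc : ContinuousOn Jf (uIcc 0 T)).intervalIntegrable
  -- derivative of V
  have hVd : ∀ t ∈ Icc (0:ℝ) T, HasDerivWithinAt V (q t - Jf t) (Icc 0 T) t := by
    intro t ht
    have h1 := quadForm_hasDeriv (fun s => (M s)ᵀ * X s * M s) Y x x' (Icc 0 T) t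
      (hY t ht) (hx' t ht)
    have h2 := key_algebra lam hlam.ne' (M t) (A t) (X t) (Y t) (B t) (C t)
      (x t) (x' t) (u t) (hX.symm t ht) (hdyn t ht) (hric t ht)
    rw [h2] at h1
    exact h1
  have hVcont : ContinuousOn V (Icc 0 T) := fun t ht => (hVd t ht).continuousWithinAt
  -- FTC
  have hftc : ∫ t in (0:ℝ)..T, (q t - Jf t) = V T - V 0 := by
    refine intervalIntegral.integral_eq_sub_of_hasDeriv_right_of_le hT.le hVcont
      (fun t ht => ?_) (hqint.sub hJint)
    exact ((hVd t (mem_Icc_of_Ioo ht)).hasDerivAt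
      (Icc_mem_nhds ht.1 ht.2)).hasDerivWithinAt
  rw [intervalIntegral.integral_sub hqint hJint] at hftc
  have hVT : V T = 0 := by simp [hV, hX.terminal]
  have hV0 : V 0 = x₀ ⬝ᵥ ((M 0)ᵀ * X 0 * M 0).mulVec x₀ := by
    simp [hV, hadm.init]
  have hJval : ∫ t in (0:ℝ)..T, Jf t = V 0 := by
    have : cost lam T C u x = (1 / 2) * ∫ t in (0:ℝ)..T, Jf t := rfl
    rw [this] at hopt
    rw [hV0]
    linarith
  have hq0 : ∫ t in (0:ℝ)..T, q t = 0 := by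
    rw [hVT, hJval] at hftc
    linarith
  -- q vanishes on Icc
  have hae : q =ᵐ[volume.restrict (Ioc 0 T)] 0 :=
    (intervalIntegral.integral_eq_zero_iff_of_le_of_nonneg_ae hT.le
      (Filter.Eventually.of_forall fun t =>
        mul_nonneg hlam.le (dot_self_nonneg (w t))) hqint).mp hq0
  have hIoc : EqOn q 0 (Ioc 0 T) := by
    refine Measure.eqOn_of_ae_eq hae (hqc.mono Ioc_subset_Icc_self) continuousOn_const ?_
    rw [interior_Ioc, closure_Ioo hT.ne]
    exact Ioc_subset_Icc_self
  have hIcc : EqOn q 0 (Icc 0 T) := by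
    refine hIoc.of_subset_closure hqc continuousOn_const Ioc_subset_Icc_self ?_
    rw [closure_Ioc hT.ne]
  -- conclude
  intro t ht
  have hqt : lam * (w t ⬝ᵥ w t) = 0 := hIcc ht
  have hwt : w t = 0 := by
    have : w t ⬝ᵥ w t = 0 := by
      rcases mul_eq_zero.mp hqt with h | h
      · exact absurd h hlam.ne'
      · exact h
    exact dotProduct_self_eq_zero.mp this
  have : u t + (1 / lam) • v t = 0 := hwt
  have := eq_neg_of_add_eq_zero_left this
  exact this
end
end

section
/- For every Riccati solution X and every x₀ ∈ ℝ^n for which there exists an admissible pair (u, x) with initial state x₀ satisfying the feedback law u(t) = −(1/λ)·B̂(t)ᵀ X(t) M(t) x(t) for all t ∈ [0,T], the quadratic form of the Riccati solution at the initial time is nonnegative: x₀ᵀ M(0)ᵀ X(0) M(0) x₀ ≥ 0. -/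
open Matrix Set MeasureTheory

noncomputable section

private lemma dot_triple {n p : ℕ} (A : Matrix (Fin p) (Fin n) ℝ) (X : Matrix (Fin p) (Fin p) ℝ)
    (B : Matrix (Fin p) (Fin n) ℝ) (v w : Fin n → ℝ) :
    v ⬝ᵥ (Aᵀ * X * B).mulVec w = A.mulVec v ⬝ᵥ X.mulVec (B.mulVec w) := by
  rw [← Matrix.mulVec_mulVec, ← Matrix.mulVec_mulVec, Matrix.dotProduct_mulVec,
    Matrix.vecMul_transpose]

private lemma dot_pair {n p : ℕ} (A : Matrix (Fin p) (Fin n) ℝ)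
    (B : Matrix (Fin p) (Fin n) ℝ) (v w : Fin n → ℝ) :
    v ⬝ᵥ (Aᵀ * B).mulVec w = A.mulVec v ⬝ᵥ B.mulVec w := by
  rw [← Matrix.mulVec_mulVec, Matrix.dotProduct_mulVec, Matrix.vecMul_transpose]

private lemma dot_symm {p : ℕ} {X : Matrix (Fin p) (Fin p) ℝ} (hs : Xᵀ = X) (a b : Fin p → ℝ) :
    a ⬝ᵥ X.mulVec b = b ⬝ᵥ X.mulVec a := by
  rw [Matrix.dotProduct_mulVec, ← Matrix.mulVec_transpose, hs, dotProduct_comm]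

private lemma mulVec_dot {n p : ℕ} (B : Matrix (Fin p) (Fin n) ℝ) (u : Fin n → ℝ) (y : Fin p → ℝ) :
    B.mulVec u ⬝ᵥ y = Bᵀ.mulVec y ⬝ᵥ u := by
  rw [dotProduct_comm, Matrix.dotProduct_mulVec, ← Matrix.mulVec_transpose]

private lemma riccati_aux {n m r : ℕ} (T lam : ℝ) (hT : 0 < T)
    (hlam : 0 < lam)
    (M A : ℝ → Matrix (Fin n) (Fin n) ℝ) (B : ℝ → Matrix (Fin n) (Fin m) ℝ)
    (C : ℝ → Matrix (Fin r) (Fin n) ℝ)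
    (X : ℝ → Matrix (Fin n) (Fin n) ℝ)
    (hXsymm : ∀ t ∈ Icc (0:ℝ) T, (X t)ᵀ = X t) (hXT : X T = 0)
    (Y : ℝ → Matrix (Fin n) (Fin n) ℝ)
    (hY : ∀ t ∈ Icc (0:ℝ) T, ∀ i j,
      HasDerivWithinAt (fun s => ((M s)ᵀ * X s * M s) i j) (Y t i j) (Icc (0:ℝ) T) t)
    (hric : ∀ t ∈ Icc (0:ℝ) T,
      -(Y t) = (C t)ᵀ * C t + (A t)ᵀ * X t * M t + (M t)ᵀ * X t * A t
        - (1 / lam) • ((M t)ᵀ * X t * B t * (B t)ᵀ * X t * M t))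
    (x₀ : Fin n → ℝ)
    (u : ℝ → Fin m → ℝ) (x : ℝ → Fin n → ℝ)
    (x' : ℝ → Fin n → ℝ)
    (hxd : ∀ t ∈ Icc (0:ℝ) T, ∀ i, HasDerivWithinAt (fun s => x s i) (x' t i) (Icc (0:ℝ) T) t)
    (hdyn : ∀ t ∈ Icc (0:ℝ) T, (M t).mulVec (x' t) = (A t).mulVec (x t) + (B t).mulVec (u t))
    (hinit : x 0 = x₀)
    (hufb : ∀ t ∈ Icc (0:ℝ) T, u t = -((1 / lam) • ((B t)ᵀ * X t * M t).mulVec (x t))) :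
    0 ≤ x₀ ⬝ᵥ ((M 0)ᵀ * X 0 * M 0).mulVec x₀ := by
  set P : ℝ → Matrix (Fin n) (Fin n) ℝ := fun s => (M s)ᵀ * X s * M s with hPdef
  set V : ℝ → ℝ := fun s => ∑ i, ∑ j, x s i * (P s i j * x s j) with hVdef
  set D : ℝ → ℝ := fun t => ∑ i, ∑ j,
    (x' t i * (P t i j * x t j) + x t i * (Y t i j * x t j + P t i j * x' t j)) with hDdef
  have hderiv : ∀ t ∈ Icc (0:ℝ) T, HasDerivWithinAt V (D t) (Icc (0:ℝ) T) t := by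
    intro t ht
    apply HasDerivWithinAt.fun_sum
    intro i _
    apply HasDerivWithinAt.fun_sum
    intro j _
    exact (hxd t ht i).mul ((hY t ht i j).mul (hxd t ht j))
  have hDval : ∀ t, D t = x' t ⬝ᵥ (P t).mulVec (x t)
      + (x t ⬝ᵥ (Y t).mulVec (x t) + x t ⬝ᵥ (P t).mulVec (x' t)) := by
    intro t
    simp only [hDdef, dotProduct, mulVec, Finset.mul_sum, mul_add, Finset.sum_add_distrib]
  have hDle : ∀ t ∈ Icc (0:ℝ) T, D t ≤ 0 := by
    intro t ht
    have hsym := hXsymm t ht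
    set v := x t with hv
    set w := x' t with hw
    set z := (M t).mulVec v with hz
    set q := (B t)ᵀ.mulVec ((X t).mulVec z) with hqdef
    have e1 : w ⬝ᵥ (P t).mulVec v = (M t).mulVec w ⬝ᵥ (X t).mulVec z := dot_triple _ _ _ _ _
    have e3 : v ⬝ᵥ (P t).mulVec w = (M t).mulVec w ⬝ᵥ (X t).mulVec z := by
      rw [hPdef]; rw [dot_triple, ← hz, dot_symm hsym]
    have hq : u t = -((1/lam) • q) := by
      rw [hufb t ht, hqdef, hz, ← Matrix.mulVec_mulVec, ← Matrix.mulVec_mulVec]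
    have hMw : (M t).mulVec w = (A t).mulVec v + (B t).mulVec (u t) := hdyn t ht
    have hYt : Y t = -((C t)ᵀ * C t + (A t)ᵀ * X t * M t + (M t)ᵀ * X t * A t
        - (1 / lam) • ((M t)ᵀ * X t * B t * (B t)ᵀ * X t * M t)) := by
      rw [← hric t ht, neg_neg]
    have i1 : v ⬝ᵥ ((C t)ᵀ * C t).mulVec v = (C t).mulVec v ⬝ᵥ (C t).mulVec v :=
      dot_pair _ _ _ _
    have i2 : v ⬝ᵥ ((A t)ᵀ * X t * M t).mulVec v = (A t).mulVec v ⬝ᵥ (X t).mulVec z := by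
      rw [dot_triple, ← hz]
    have i3 : v ⬝ᵥ ((M t)ᵀ * X t * A t).mulVec v = (A t).mulVec v ⬝ᵥ (X t).mulVec z := by
      rw [dot_triple, ← hz, dot_symm hsym]
    have i4 : v ⬝ᵥ ((M t)ᵀ * X t * B t * (B t)ᵀ * X t * M t).mulVec v = q ⬝ᵥ q := by
      rw [← Matrix.mulVec_mulVec, ← Matrix.mulVec_mulVec, ← Matrix.mulVec_mulVec,
        ← Matrix.mulVec_mulVec, ← Matrix.mulVec_mulVec, ← hz, ← hqdef,
        Matrix.dotProduct_mulVec, Matrix.vecMul_transpose, ← hz, dot_symm hsym,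
        mulVec_dot]
    have i5 : (B t).mulVec (u t) ⬝ᵥ (X t).mulVec z = -((1/lam) * (q ⬝ᵥ q)) := by
      rw [mulVec_dot, ← hqdef, hq]
      simp [dotProduct_smul, smul_eq_mul]
    have e2 : v ⬝ᵥ (Y t).mulVec v
        = -((C t).mulVec v ⬝ᵥ (C t).mulVec v) - 2 * ((A t).mulVec v ⬝ᵥ (X t).mulVec z)
          + (1/lam) * (q ⬝ᵥ q) := by
      rw [hYt, Matrix.neg_mulVec, dotProduct_neg, Matrix.sub_mulVec, Matrix.add_mulVec,
        Matrix.add_mulVec, dotProduct_sub, dotProduct_add, dotProduct_add,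
        Matrix.smul_mulVec, dotProduct_smul, i1, i2, i3, i4, smul_eq_mul]
      ring
    have hCnn : 0 ≤ (C t).mulVec v ⬝ᵥ (C t).mulVec v :=
      Finset.sum_nonneg fun i _ => mul_self_nonneg _
    have hqnn : 0 ≤ q ⬝ᵥ q := Finset.sum_nonneg fun i _ => mul_self_nonneg _
    have hDeq : D t = -((C t).mulVec v ⬝ᵥ (C t).mulVec v) - (1/lam) * (q ⬝ᵥ q) := by
      rw [hDval t, e1, e3, e2, hMw, add_dotProduct, i5]
      ring
    rw [hDeq]
    have : 0 ≤ (1/lam) * (q ⬝ᵥ q) := by positivity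
    linarith
  have hVc : ContinuousOn V (Icc (0:ℝ) T) := fun t ht => (hderiv t ht).continuousWithinAt
  have hanti : AntitoneOn V (Icc (0:ℝ) T) := by
    apply antitoneOn_of_deriv_nonpos (convex_Icc 0 T) hVc
    · intro t ht
      rw [interior_Icc] at ht
      exact (((hderiv t ⟨ht.1.le, ht.2.le⟩).hasDerivAt
        (Icc_mem_nhds ht.1 ht.2)).differentiableAt).differentiableWithinAt
    · intro t ht
      rw [interior_Icc] at ht
      rw [((hderiv t ⟨ht.1.le, ht.2.le⟩).hasDerivAt (Icc_mem_nhds ht.1 ht.2)).deriv]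
      exact hDle t ⟨ht.1.le, ht.2.le⟩
  have hVT : V T = 0 := by simp [hVdef, hPdef, hXT]
  have h0 : V T ≤ V 0 := hanti (left_mem_Icc.mpr hT.le) (right_mem_Icc.mpr hT.le) hT.le
  have hV0 : V 0 = x₀ ⬝ᵥ ((M 0)ᵀ * X 0 * M 0).mulVec x₀ := by
    simp [hVdef, hPdef, hinit, dotProduct, mulVec, Finset.mul_sum]
  linarith

/-- Nonnegativity of the Riccati quadratic form at the initial time, for any initial
state from which a feedback-controlled admissible trajectory exists. -/
theorem riccati_initial_quadratic_form_nonneg {n m r : ℕ} (T lam : ℝ) (hT : 0 < T)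
    (hlam : 0 < lam)
    (M A : ℝ → Matrix (Fin n) (Fin n) ℝ) (B : ℝ → Matrix (Fin n) (Fin m) ℝ)
    (C : ℝ → Matrix (Fin r) (Fin n) ℝ)
    (hM : MatContOn M (Icc 0 T)) (hA : MatContOn A (Icc 0 T))
    (hB : MatContOn B (Icc 0 T)) (hC : MatContOn C (Icc 0 T))
    (X : ℝ → Matrix (Fin n) (Fin n) ℝ) (hX : RiccatiSol T lam M A B C X)
    (x₀ : Fin n → ℝ)
    (hfb : ∃ (u : ℝ → Fin m → ℝ) (x : ℝ → Fin n → ℝ), Admissible T M A B x₀ u x ∧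
      ∀ t ∈ Icc (0:ℝ) T, u t = -((1 / lam) • ((B t)ᵀ * X t * M t).mulVec (x t))) :
    0 ≤ x₀ ⬝ᵥ ((M 0)ᵀ * X 0 * M 0).mulVec x₀ := by
  obtain ⟨u, x, hadm, hufb⟩ := hfb
  obtain ⟨x', hxd, hdyn⟩ := hadm.dyn
  obtain ⟨Y, hY, hric⟩ := hX.riccati
  exact riccati_aux T lam hT hlam M A B C X hX.symm hX.terminal Y hY hric x₀ u x x' hxd hdyn
    hadm.init hufb
end
end
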